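/- Let n ≥ 1 and k ≥ 2. Then zcl_k(n) = k·n if and only if n is even and k ≥ max({3} ∪ {⌈(2^{i+1} − 1)/Z_i(n)⌉ : i ∈ S(n)}). -/

import Mathlib

open MvPolynomial in
/-- `zcl k n` is the maximum of `a_1 + ... + a_(k-1)` over tuples of natural numbers
such that the product of the `(x_i + x_k)^(a_i)` is nonzero in
`(Z/2)[x_1, ..., x_k] / (x_1^(n+1), ..., x_k^(n+1))`. (For `k ≥ 1` the ring has
`(k-1)+1 = k` variables, the last one playing the role of `x_k`.) -/
noncomputable def zcl (k n : ℕ) : ℕ :=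
  sSup {s : ℕ | ∃ a : Fin (k - 1) → ℕ, s = ∑ i, a i ∧
    Ideal.Quotient.mk
      (Ideal.span (Set.range fun i : Fin (k - 1 + 1) =>
        (X i : MvPolynomial (Fin (k - 1 + 1)) (ZMod 2)) ^ (n + 1)))
      (∏ i : Fin (k - 1), (X i.castSucc + X (Fin.last (k - 1))) ^ a i) ≠ 0}

/-- `Zfun i n` is `Z_i(n)`, the sum over `j = 0, ..., i` of `(1 - eps_j) * 2^j`,
where `n` has binary digits `eps_j`. -/
def Zfun (i n : ℕ) : ℕ := ∑ j ∈ Finset.range (i + 1), if n.testBit j then 0 else 2 ^ j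

/-- `S(n)`: the set of `i ≥ 1` with `eps_i = eps_(i-1) = 1` and `eps_(i+1) = 0` in the
binary expansion of `n`, as a finset (any such `i` satisfies `2^i ≤ n`, so `i ≤ n`). -/
def Sfin (n : ℕ) : Finset ℕ :=
  (Finset.range (n + 1)).filter fun i =>
    0 < i ∧ n.testBit i ∧ n.testBit (i - 1) ∧ ¬n.testBit (i + 1)

/-- For `n ≥ 1` and `k ≥ 2`: `zcl_k(n) = k*n` iff `n` is even and
`k ≥ max({3} ∪ {ceil((2^(i+1) - 1)/Z_i(n)) : i ∈ S(n)})`. -/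

lemma testBit_ge {n i : ℕ} (h : n.testBit i) : 2 ^ i ≤ n := by
  rw [Nat.testBit_eq_decide_div_mod_eq, decide_eq_true_eq] at h
  have h1 : 1 ≤ n / 2 ^ i := by
    generalize hq : n / 2 ^ i = q at h; omega
  exact (Nat.one_le_div_iff (Nat.two_pow_pos i)).1 h1

def Wmask (n j : ℕ) : ℕ := ∑ l ∈ Finset.range j, if n.testBit l then 0 else 2 ^ l

lemma mod_two_pow_sum (x j : ℕ) :
    x % 2 ^ j = ∑ l ∈ Finset.range j, if x.testBit l then 2 ^ l else 0 := by
  induction j with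
  | zero => simp [Nat.mod_one]
  | succ j ih =>
    rw [Finset.sum_range_succ, ← ih, pow_succ, Nat.mod_mul]
    congr 1
    rw [Nat.testBit_eq_decide_div_mod_eq]
    rcases Nat.mod_two_eq_zero_or_one (x / 2 ^ j) with h | h <;> simp [h]

lemma mod_pow_succ' (x j : ℕ) :
    x % 2 ^ (j + 1) = x % 2 ^ j + (if x.testBit j then 2 ^ j else 0) := by
  rw [mod_two_pow_sum x (j+1), Finset.sum_range_succ, ← mod_two_pow_sum]

lemma Wmask_succ (n j : ℕ) :
    Wmask n (j + 1) = Wmask n j + (if n.testBit j then 0 else 2 ^ j) := by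
  rw [Wmask, Finset.sum_range_succ]; rfl

lemma Wmask_mono (n : ℕ) {j j' : ℕ} (h : j ≤ j') : Wmask n j ≤ Wmask n j' :=
  Finset.sum_le_sum_of_subset (Finset.range_subset_range.2 h)

lemma Wmask_block (n a b : ℕ) (hab : a ≤ b) (h : ∀ l, a ≤ l → l < b → n.testBit l) :
    Wmask n b = Wmask n a := by
  have hsplit : Wmask n a + ∑ l ∈ Finset.Ico a b, (if n.testBit l then 0 else 2 ^ l) = Wmask n b := by
    rw [Wmask, Wmask, Finset.range_eq_Ico, Finset.range_eq_Ico]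
    exact Finset.sum_Ico_consecutive (M := ℕ) _ (Nat.zero_le a) hab
  have hz : ∑ l ∈ Finset.Ico a b, (if n.testBit l then 0 else 2 ^ l) = 0 := by
    apply Finset.sum_eq_zero
    intro l hl
    rw [Finset.mem_Ico] at hl
    simp [h l hl.1 hl.2]
  omega

lemma mod_le_mod_pow (x : ℕ) {a b : ℕ} (h : a ≤ b) : x % 2 ^ a ≤ x % 2 ^ b := by
  conv_lhs => rw [← Nat.mod_mod_of_dvd x (pow_dvd_pow 2 h)]
  exact Nat.mod_le _ _

lemma claimC (n m : ℕ) (hn : Even n) (hm : 2 ≤ m)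
    (H : ∀ i, 0 < i → n.testBit i → n.testBit (i-1) → ¬n.testBit (i+1) →
      n % 2 ^ (i+1) ≤ m * Wmask n (i+1)) :
    ∀ j, n % 2 ^ j ≤ m * Wmask n j := by
  intro j
  induction j using Nat.strong_induction_on with
  | _ j ih =>
  match j with
  | 0 => simp [Nat.mod_one, Wmask]
  | (j + 1) =>
    by_cases hbj : n.testBit j
    · -- j is a one-bit; find the top of its block
      have hbit0 : ¬ n.testBit 0 := by
        rw [Nat.even_iff] at hn; simp [Nat.testBit_zero, hn]
      have hj1 : 1 ≤ j := by
        rcases Nat.eq_zero_or_pos j with rfl | h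
        · exact absurd hbj hbit0
        · exact h
      have hex : ∃ t, ¬ n.testBit (j + t + 1) := by
        refine ⟨n, ?_⟩
        have hlt : n < 2 ^ (j + n + 1) :=
          lt_of_lt_of_le (Nat.lt_two_pow_self (n := n)) (Nat.pow_le_pow_right (by norm_num) (by omega))
        simp [Nat.testBit_lt_two_pow hlt]
      classical
      have hspec : ¬ n.testBit (j + Nat.find hex + 1) := Nat.find_spec hex
      set d := Nat.find hex with hd
      have hblock : ∀ t, t ≤ d → n.testBit (j + t) := by
        intro t ht
        rcases Nat.eq_zero_or_pos t with rfl | htpos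
        · simpa using hbj
        · have h1 : n.testBit (j + (t-1) + 1) := by
            have := Nat.find_min hex (m := t - 1) (by omega)
            simpa using this
          have he : j + (t-1) + 1 = j + t := by omega
          rwa [he] at h1
      have hWeq : Wmask n (j + d + 1) = Wmask n (j + 1) := by
        apply Wmask_block n (j+1) (j+d+1) (by omega)
        intro l hl1 hl2
        have : l = j + (l - j) := by omega
        rw [this]
        exact hblock (l - j) (by omega)
      have hmodle : n % 2 ^ (j + 1) ≤ n % 2 ^ (j + d + 1) := mod_le_mod_pow n (by omega)
      rcases Nat.eq_zero_or_pos d with hd0 | hdpos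
      · -- isolated-or-not: top of block is j itself
        rw [hd0] at hspec
        by_cases hprev : n.testBit (j - 1)
        · -- j ∈ S
          have := H j (by omega) hbj hprev (by simpa using hspec)
          exact this
        · -- isolated bit j, use IH at j - 1
          have hIH : n % 2 ^ (j-1) ≤ m * Wmask n (j-1) := ih (j-1) (by omega)
          have h1 : n % 2 ^ (j+1) = n % 2 ^ (j-1) + 2 ^ j := by
            have e1 : n % 2 ^ (j+1) = n % 2 ^ j + 2 ^ j := by
              rw [mod_pow_succ', if_pos hbj]
            have e2 : n % 2 ^ j = n % 2 ^ (j-1) := by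
              have hje : j = (j - 1) + 1 := by omega
              conv_lhs => rw [hje]
              rw [mod_pow_succ', if_neg hprev]
              omega
            omega
          have h2 : Wmask n (j+1) = Wmask n (j-1) + 2 ^ (j-1) := by
            have e1 : Wmask n (j+1) = Wmask n j := by rw [Wmask_succ, if_pos hbj]; omega
            have e2 : Wmask n j = Wmask n (j-1) + 2 ^ (j-1) := by
              have hje : j = (j - 1) + 1 := by omega
              conv_lhs => rw [hje]
              rw [Wmask_succ, if_neg hprev]
            omega
          have hpow : 2 ^ j = 2 * 2 ^ (j - 1) := by
            have : j = (j-1) + 1 := by omega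
            conv_lhs => rw [this]
            ring
          calc n % 2 ^ (j+1) = n % 2 ^ (j-1) + 2 ^ j := h1
          _ ≤ m * Wmask n (j-1) + m * 2 ^ (j-1) := by
              have : 2 ^ j ≤ m * 2 ^ (j-1) := by
                rw [hpow]; exact Nat.mul_le_mul_right _ hm
              omega
          _ = m * Wmask n (j+1) := by rw [h2]; ring
      · -- block extends above j: top is i = j + d ∈ S
        have hi := H (j + d) (by omega) (hblock d le_rfl) ?_ ?_
        · calc n % 2 ^ (j+1) ≤ n % 2 ^ (j+d+1) := hmodle
          _ ≤ m * Wmask n (j+d+1) := hi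
          _ = m * Wmask n (j+1) := by rw [hWeq]
        · have : n.testBit (j + (d-1)) := hblock (d-1) (by omega)
          have he : j + d - 1 = j + (d - 1) := by omega
          rwa [he]
        · exact hspec
    · -- j is a zero bit
      have h1 : n % 2 ^ (j+1) = n % 2 ^ j := by rw [mod_pow_succ', if_neg hbj]; omega
      calc n % 2 ^ (j+1) = n % 2 ^ j := h1
      _ ≤ m * Wmask n j := ih j (by omega)
      _ ≤ m * Wmask n (j+1) := Nat.mul_le_mul_left _ (Wmask_mono n (by omega))


lemma sum_two_pow (j : ℕ) : (∑ l ∈ Finset.range j, 2 ^ l : ℕ) = 2 ^ j - 1 := by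
  induction j with
  | zero => simp
  | succ j ih =>
    rw [Finset.sum_range_succ, ih]
    have := Nat.one_le_two_pow (n := j); rw [pow_succ]; omega

lemma greedy (n m : ℕ) (hC : ∀ j, n % 2 ^ j ≤ m * Wmask n j) :
    ∀ j R, R % 2 ^ j = n % 2 ^ j → R ≤ m * Wmask n j →
    ∃ s : ℕ → ℕ, (∀ l, s l ≤ m) ∧ (∀ l, n.testBit l → s l = 0) ∧ (∀ l, j ≤ l → s l = 0) ∧
      ∑ l ∈ Finset.range j, s l * 2 ^ l = R := by
  intro j
  induction j with
  | zero =>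
    intro R _ hR2
    have : Wmask n 0 = 0 := rfl
    have hW0 : Wmask n 0 = 0 := rfl
    rw [hW0] at hR2
    refine ⟨fun _ => 0, by simp, by simp, by simp, by simp; omega⟩
  | succ j ih =>
    intro R hR1 hR2
    have hmod : R % 2 ^ j = n % 2 ^ j := by
      have h1 : R % 2 ^ j = (R % 2 ^ (j+1)) % 2 ^ j :=
        (Nat.mod_mod_of_dvd R (pow_dvd_pow 2 (by omega))).symm
      have h2 : n % 2 ^ j = (n % 2 ^ (j+1)) % 2 ^ j :=
        (Nat.mod_mod_of_dvd n (pow_dvd_pow 2 (by omega))).symm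
      rw [h1, h2, hR1]
    by_cases hbit : n.testBit j
    · have hW : Wmask n (j+1) = Wmask n j := by rw [Wmask_succ, if_pos hbit]; omega
      obtain ⟨s, hs1, hs2, hs3, hs4⟩ := ih R hmod (by rw [← hW]; exact hR2)
      refine ⟨s, hs1, hs2, fun l hl => hs3 l (by omega), ?_⟩
      rw [Finset.sum_range_succ, hs4, hs3 j le_rfl]
      simp
    · have hW : Wmask n (j+1) = Wmask n j + 2 ^ j := by rw [Wmask_succ, if_neg hbit]
      set q := min m (R / 2 ^ j) with hqdef
      have hq2R : q * 2 ^ j ≤ R := by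
        calc q * 2 ^ j ≤ (R / 2 ^ j) * 2 ^ j := Nat.mul_le_mul_right _ (min_le_right _ _)
        _ ≤ R := Nat.div_mul_le_self R _
      set R' := R - q * 2 ^ j with hR'def
      have hmod' : R' % 2 ^ j = n % 2 ^ j := by
        have : R = R' + q * 2 ^ j := by omega
        rw [this, Nat.add_mul_mod_self_right] at hmod
        exact hmod
      have hbound : R' ≤ m * Wmask n j := by
        by_cases hcap : m ≤ R / 2 ^ j
        · have hqm : q = m := by rw [hqdef]; omega
          rw [hR'def, hqm]
          have : R ≤ m * Wmask n j + m * 2 ^ j := by rw [← Nat.mul_add, ← hW]; exact hR2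
          omega
        · have hqm : q = R / 2 ^ j := by rw [hqdef]; omega
          have hRR : R' = R % 2 ^ j := by
            have hdm := Nat.div_add_mod R (2 ^ j)
            have hcm : (R / 2 ^ j) * 2 ^ j = 2 ^ j * (R / 2 ^ j) := Nat.mul_comm _ _
            have : R' = R - (R / 2 ^ j) * 2 ^ j := by rw [hR'def, hqm]
            omega
          rw [hRR, hmod]
          exact hC j
      obtain ⟨s, hs1, hs2, hs3, hs4⟩ := ih R' hmod' hbound
      refine ⟨fun l => if l = j then q else s l, ?_, ?_, ?_, ?_⟩
      · intro l
        by_cases h : l = j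
        · simp only [h, if_pos rfl]; rw [hqdef]; exact min_le_left _ _
        · simp [h, hs1 l]
      · intro l hl; by_cases h : l = j
        · subst h; exact absurd hl hbit
        · simp [h, hs2 l hl]
      · intro l hl
        have : l ≠ j := by omega
        simp [this, hs3 l (by omega)]
      · rw [Finset.sum_range_succ]
        have he : ∑ l ∈ Finset.range j, (if l = j then q else s l) * 2 ^ l
            = ∑ l ∈ Finset.range j, s l * 2 ^ l := by
          apply Finset.sum_congr rfl
          intro l hl
          rw [Finset.mem_range] at hl
          simp [Nat.ne_of_lt hl]
        rw [he, hs4]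
        show R' + (if j = j then q else s j) * 2 ^ j = R
        rw [if_pos rfl]
        omega

lemma testBit_sum_ite (p : ℕ → Prop) [DecidablePred p] :
    ∀ (L r : ℕ), (∑ l ∈ Finset.range L, if p l then 2 ^ l else 0).testBit r = true ↔ (r < L ∧ p r) := by
  intro L
  induction L with
  | zero => simp
  | succ L ih =>
    intro r
    have hSle : (∑ l ∈ Finset.range L, if p l then 2 ^ l else 0) < 2 ^ L := by
      have h1 : (∑ l ∈ Finset.range L, if p l then 2 ^ l else 0) ≤ ∑ l ∈ Finset.range L, 2 ^ l := by
        apply Finset.sum_le_sum; intro l _; split <;> simp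
      rw [sum_two_pow] at h1
      have := Nat.one_le_two_pow (n := L); omega
    rw [Finset.sum_range_succ]
    by_cases hpL : p L
    · rw [if_pos hpL, Nat.add_comm]
      rcases lt_trichotomy r L with h | h | h
      · rw [Nat.testBit_two_pow_add_gt h]
        rw [ih r]
        constructor
        · rintro ⟨h1, h2⟩; exact ⟨by omega, h2⟩
        · rintro ⟨_, h2⟩; exact ⟨h, h2⟩
      · subst h
        rw [Nat.testBit_two_pow_add_eq, Nat.testBit_lt_two_pow hSle]
        simpa using hpL
      · have hlt : 2 ^ L + (∑ l ∈ Finset.range L, if p l then 2 ^ l else 0) < 2 ^ r := by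
          have h2 : 2 ^ (L + 1) ≤ 2 ^ r := Nat.pow_le_pow_right (by norm_num) (by omega)
          rw [pow_succ] at h2; omega
        rw [Nat.testBit_lt_two_pow hlt]
        constructor
        · intro hc; exact absurd hc (by simp)
        · rintro ⟨h1, _⟩; omega
    · rw [if_neg hpL]
      simp only [Nat.add_zero, ih r]
      constructor
      · rintro ⟨h1, h2⟩; exact ⟨by omega, h2⟩
      · rintro ⟨h1, h2⟩
        refine ⟨?_, h2⟩
        rcases Nat.lt_succ_iff_lt_or_eq.1 h1 with h | h
        · exact h
        · subst h; exact absurd h2 hpL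

/-- Kummer/Lucas: `(n+b).choose n` is odd iff the addition `n + b` is carry-free. -/
lemma kummer : ∀ N n b : ℕ, n + b ≤ N →
    (Odd ((n + b).choose n) ↔ ∀ l, ¬(n.testBit l ∧ b.testBit l)) := by
  intro N
  induction N with
  | zero =>
    intro n b h
    have hn : n = 0 := by omega
    have hb : b = 0 := by omega
    subst hn; subst hb
    simp
  | succ N ih =>
    intro n b h
    rcases Nat.eq_zero_or_pos (n + b) with h0 | h0
    · have hn : n = 0 := by omega
      have hb : b = 0 := by omega
      subst hn; subst hb; simp
    · have hmod := @Choose.choose_modEq_choose_mod_mul_choose_div_nat (n + b) n 2 ⟨Nat.prime_two⟩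
      unfold Nat.ModEq at hmod
      by_cases hc : n % 2 = 1 ∧ b % 2 = 1
      · -- carry at bit 0; choose is even, RHS false
        have h2 : (n + b) % 2 = 0 := by omega
        have hn2 : n % 2 = 1 := hc.1
        rw [h2, hn2] at hmod
        simp [Nat.choose] at hmod
        constructor
        · intro hodd
          rw [Nat.odd_iff] at hodd; omega
        · intro hall
          exact absurd ⟨by simp [Nat.testBit_zero, hc.1], by simp [Nat.testBit_zero, hc.2]⟩ (hall 0)
      · -- no carry at bit 0
        have h1 : ((n + b) % 2).choose (n % 2) = 1 := by
          rcases Nat.mod_two_eq_zero_or_one n with hn2 | hn2 <;>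
            rcases Nat.mod_two_eq_zero_or_one b with hb2 | hb2 <;>
              simp [hn2, hb2, Nat.add_mod, Nat.choose] at hc ⊢
        have hdiv : (n + b) / 2 = n / 2 + b / 2 := by omega
        rw [h1, one_mul, hdiv] at hmod
        have hle : n / 2 + b / 2 ≤ N := by omega
        have IH := ih (n / 2) (b / 2) hle
        have hodd_iff : Odd ((n + b).choose n) ↔ Odd ((n / 2 + b / 2).choose (n / 2)) := by
          rw [Nat.odd_iff, Nat.odd_iff, hmod]
        rw [hodd_iff, IH]
        constructor
        · intro hall l
          rcases l with _ | l
          · intro ⟨ha, hb'⟩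
            rw [Nat.testBit_zero, decide_eq_true_eq] at ha hb'
            exact hc ⟨ha, hb'⟩
          · intro ⟨ha, hb'⟩
            rw [Nat.testBit_succ] at ha hb'
            exact hall l ⟨ha, hb'⟩
        · intro hall l ⟨ha, hb'⟩
          rw [← Nat.testBit_succ] at ha hb'
          exact hall (l + 1) ⟨ha, hb'⟩

lemma mod_add_Wmask (n j : ℕ) : n % 2 ^ j + Wmask n j = 2 ^ j - 1 := by
  rw [mod_two_pow_sum, Wmask, ← Finset.sum_add_distrib, ← sum_two_pow (j := j)]
  exact Finset.sum_congr rfl fun l _ => by split <;> omega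

lemma sum_ite_lt_fin (m s c : ℕ) (h : s ≤ m) :
    ∑ t : Fin m, (if (t : ℕ) < s then c else 0) = s * c := by
  rw [Fin.sum_univ_eq_sum_range (fun t => if t < s then c else 0)]
  rw [← Finset.sum_filter]
  have he : (Finset.range m).filter (fun t => t < s) = Finset.range s := by
    ext t; simp only [Finset.mem_filter, Finset.mem_range]; omega
  rw [he, Finset.sum_const, Finset.card_range, smul_eq_mul]

/-- The key combinatorial characterization. -/
lemma comb (n m : ℕ) (hn : 1 ≤ n) (hm : 1 ≤ m) :
    (∃ b : Fin m → ℕ, (∑ t, b t) = n ∧ ∀ t l, ¬(n.testBit l ∧ (b t).testBit l)) ↔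
      (Even n ∧ 2 ≤ m ∧ ∀ i, 0 < i → n.testBit i → n.testBit (i-1) → ¬n.testBit (i+1) →
        2 ^ (i+1) - 1 ≤ (m+1) * Wmask n (i+1)) := by
  constructor
  · rintro ⟨b, hsum, hcf⟩
    have heven : Even n := by
      by_contra hodd
      have h2 : n % 2 = 1 := by rw [Nat.even_iff] at hodd; omega
      have hb0 : ∀ t, b t % 2 = 0 := by
        intro t
        have := hcf t 0
        simp only [Nat.testBit_zero, decide_eq_true_eq] at this
        omega
      have : n % 2 = 0 := by
        rw [← hsum, Finset.sum_nat_mod]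
        have : ∀ t ∈ Finset.univ, b t % 2 = 0 := fun t _ => hb0 t
        rw [Finset.sum_congr rfl this]
        simp
      omega
    have hkey : ∀ j, n % 2 ^ j ≤ m * Wmask n j := by
      intro j
      have sub1 : ∀ t, b t % 2 ^ j ≤ Wmask n j := by
        intro t
        rw [mod_two_pow_sum, Wmask]
        apply Finset.sum_le_sum
        intro l _
        by_cases hbl : (b t).testBit l
        · have : ¬ n.testBit l := fun hnl => hcf t l ⟨hnl, hbl⟩
          simp [hbl, this]
        · simp [hbl]
      have sub2 : (∑ t, b t % 2 ^ j) % 2 ^ j = n % 2 ^ j := by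
        rw [← Finset.sum_nat_mod, hsum]
      have sub3 : n % 2 ^ j ≤ ∑ t, b t % 2 ^ j := by
        by_contra hlt
        push_neg at hlt
        have hT : (∑ t, b t % 2 ^ j) < 2 ^ j :=
          lt_of_lt_of_le hlt (le_of_lt (Nat.mod_lt _ (Nat.two_pow_pos j)))
        rw [Nat.mod_eq_of_lt hT] at sub2
        omega
      have sub4 : (∑ t, b t % 2 ^ j) ≤ m * Wmask n j := by
        calc (∑ t, b t % 2 ^ j) ≤ ∑ _t : Fin m, Wmask n j :=
          Finset.sum_le_sum (fun t _ => sub1 t)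
        _ = m * Wmask n j := by rw [Finset.sum_const, Finset.card_univ, Fintype.card_fin, smul_eq_mul]
      omega
    have hm2 : 2 ≤ m := by
      by_contra hm1
      obtain rfl : m = 1 := by omega
      have hb : b 0 = n := by rw [← hsum, Fin.sum_univ_one]
      have hex : ∃ l, n.testBit l := by
        by_contra hall
        push_neg at hall
        have : n = 0 := Nat.eq_of_testBit_eq (fun l => by simp [hall l, Nat.zero_testBit])
        omega
      obtain ⟨l, hl⟩ := hex
      exact hcf 0 l ⟨hl, hb ▸ hl⟩
    refine ⟨heven, hm2, fun i _ _ _ _ => ?_⟩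
    have h1 := hkey (i+1)
    have h2 := mod_add_Wmask n (i+1)
    have h3 : (m+1) * Wmask n (i+1) = m * Wmask n (i+1) + Wmask n (i+1) := by ring
    omega
  · rintro ⟨heven, hm2, H⟩
    have H' : ∀ i, 0 < i → n.testBit i → n.testBit (i-1) → ¬n.testBit (i+1) →
        n % 2 ^ (i+1) ≤ m * Wmask n (i+1) := by
      intro i h1 h2 h3 h4
      have := H i h1 h2 h3 h4
      have h5 := mod_add_Wmask n (i+1)
      have h6 : (m+1) * Wmask n (i+1) = m * Wmask n (i+1) + Wmask n (i+1) := by ring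
      have h7 := Nat.one_le_two_pow (n := i + 1)
      omega
    have hC := claimC n m heven hm2 H'
    have hnlt : n < 2 ^ (n+1) := lt_of_lt_of_le (Nat.lt_two_pow_self (n := n)) (Nat.pow_le_pow_right (by norm_num) (by omega))
    obtain ⟨s, hs1, hs2, _, hs4⟩ := greedy n m hC (n+1) n rfl (by
      have := hC (n+1)
      rwa [Nat.mod_eq_of_lt hnlt] at this)
    refine ⟨fun t => ∑ l ∈ Finset.range (n+1), if (t : ℕ) < s l then 2 ^ l else 0, ?_, ?_⟩
    · rw [Finset.sum_comm]
      have he : ∀ l ∈ Finset.range (n+1),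
          (∑ t : Fin m, if (t : ℕ) < s l then 2 ^ l else 0) = s l * 2 ^ l :=
        fun l _ => sum_ite_lt_fin m (s l) (2 ^ l) (hs1 l)
      rw [Finset.sum_congr rfl he, hs4]
    · intro t l ⟨hnl, hbl⟩
      rw [testBit_sum_ite] at hbl
      have := hs2 l hnl
      omega

open MvPolynomial

section Alg

variable (m n : ℕ)

/-- The exponent map. -/
noncomputable def Dmap (a j : Fin m → ℕ) : Fin (m+1) →₀ ℕ :=
  ∑ i, (Finsupp.single i.castSucc (j i) + Finsupp.single (Fin.last m) (a i - j i))

lemma Dmap_castSucc (a j : Fin m → ℕ) (i0 : Fin m) : Dmap m a j i0.castSucc = j i0 := by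
  rw [Dmap, Finsupp.finset_sum_apply]
  have : ∀ i ∈ Finset.univ, (Finsupp.single i.castSucc (j i) + Finsupp.single (Fin.last m) (a i - j i)) i0.castSucc
      = if i = i0 then j i else 0 := by
    intro i _
    rw [Finsupp.add_apply, Finsupp.single_apply, Finsupp.single_apply]
    have h1 : Fin.last m ≠ i0.castSucc := (Fin.castSucc_lt_last i0).ne'
    rw [if_neg h1]
    by_cases h : i = i0
    · subst h; simp
    · rw [if_neg (fun hc => h (Fin.castSucc_injective m hc)), if_neg h]; simp
  rw [Finset.sum_congr rfl this, Finset.sum_ite_eq' Finset.univ i0 j]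
  simp

lemma Dmap_last (a j : Fin m → ℕ) : Dmap m a j (Fin.last m) = ∑ i, (a i - j i) := by
  rw [Dmap, Finsupp.finset_sum_apply]
  apply Finset.sum_congr rfl
  intro i _
  rw [Finsupp.add_apply, Finsupp.single_apply, Finsupp.single_apply]
  rw [if_neg (Fin.castSucc_lt_last i).ne, if_pos rfl]
  omega

lemma Dmap_inj (a j j' : Fin m → ℕ) (h : Dmap m a j = Dmap m a j') : j = j' := by
  funext i
  have := congrArg (fun f => f i.castSucc) h
  simpa [Dmap_castSucc] using this

lemma prod_monomial {ι : Type*} (s : Finset ι) (f : ι → (Fin (m+1) →₀ ℕ)) (c : ι → ZMod 2) :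
    (∏ i ∈ s, monomial (f i) (c i)) = monomial (∑ i ∈ s, f i) (∏ i ∈ s, c i) := by
  classical
  induction s using Finset.induction with
  | empty => simp
  | insert _ _ hx ih =>
    rw [Finset.prod_insert hx, Finset.sum_insert hx, Finset.prod_insert hx, ih, monomial_mul]

lemma expandP (a : Fin m → ℕ) :
    (∏ i : Fin m, (X i.castSucc + X (Fin.last m) : MvPolynomial (Fin (m+1)) (ZMod 2)) ^ a i)
      = ∑ j ∈ Fintype.piFinset (fun i => Finset.range (a i + 1)),
          monomial (Dmap m a j) (∏ i, ((a i).choose (j i) : ZMod 2)) := by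
  have hfac : ∀ i : Fin m,
      (X i.castSucc + X (Fin.last m) : MvPolynomial (Fin (m+1)) (ZMod 2)) ^ a i
        = ∑ jv ∈ Finset.range (a i + 1),
            monomial (Finsupp.single i.castSucc jv + Finsupp.single (Fin.last m) (a i - jv))
              (((a i).choose jv : ZMod 2)) := by
    intro i
    rw [add_pow]
    apply Finset.sum_congr rfl
    intro jv _
    rw [X_pow_eq_monomial, X_pow_eq_monomial, monomial_mul, one_mul]
    rw [show ((((a i).choose jv : ℕ)) : MvPolynomial (Fin (m+1)) (ZMod 2))
        = C (((a i).choose jv : ZMod 2)) by rfl]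
    rw [mul_comm, C_mul_monomial, mul_one]
  rw [Finset.prod_congr rfl (fun i _ => hfac i), Finset.prod_univ_sum]
  apply Finset.sum_congr rfl
  intro j _
  rw [prod_monomial]
  rfl

lemma coeffP (a j : Fin m → ℕ) (hj : ∀ i, j i ≤ a i) :
    coeff (Dmap m a j)
      (∏ i : Fin m, (X i.castSucc + X (Fin.last m) : MvPolynomial (Fin (m+1)) (ZMod 2)) ^ a i)
      = ∏ i, ((a i).choose (j i) : ZMod 2) := by
  rw [expandP, coeff_sum]
  have hmem : j ∈ Fintype.piFinset (fun i => Finset.range (a i + 1)) := by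
    rw [Fintype.mem_piFinset]; intro i; rw [Finset.mem_range]; have := hj i; omega
  rw [Finset.sum_eq_single j]
  · rw [coeff_monomial, if_pos rfl]
  · intro j' _ hne
    rw [coeff_monomial, if_neg (fun hc => hne (Dmap_inj m a j' j hc))]
  · intro habs; exact absurd hmem habs

lemma zmod2_cast_ne_zero (c : ℕ) : ((c : ZMod 2) ≠ 0) ↔ Odd c := by
  rw [Ne, ZMod.natCast_eq_zero_iff, Nat.odd_iff, Nat.two_dvd_ne_zero]

/-- Characterization of nonvanishing in the quotient. -/
lemma algChar (a : Fin m → ℕ) :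
    (Ideal.Quotient.mk
      (Ideal.span (Set.range fun i : Fin (m + 1) =>
        (X i : MvPolynomial (Fin (m + 1)) (ZMod 2)) ^ (n + 1)))
      (∏ i : Fin m, (X i.castSucc + X (Fin.last m)) ^ a i) ≠ 0)
    ↔ ∃ j : Fin m → ℕ, (∀ i, j i ≤ a i ∧ j i ≤ n ∧ Odd ((a i).choose (j i)))
        ∧ (∑ i, (a i - j i)) ≤ n := by
  rw [Ne, Ideal.Quotient.eq_zero_iff_mem]
  have hspan : (Set.range fun i : Fin (m + 1) =>
      (X i : MvPolynomial (Fin (m + 1)) (ZMod 2)) ^ (n + 1))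
      = (fun s => monomial s (1 : ZMod 2)) '' Set.range (fun i : Fin (m+1) => Finsupp.single i (n+1)) := by
    rw [← Set.range_comp]
    apply congrArg
    funext i
    exact X_pow_eq_monomial
  rw [hspan, mem_ideal_span_monomial_image]
  push_neg
  constructor
  · rintro ⟨d, hd, hdle⟩
    have hdle' : ∀ v, d v ≤ n := by
      intro v
      have := hdle (Finsupp.single v (n+1)) ⟨v, rfl⟩
      rw [Finsupp.single_le_iff] at this
      omega
    rw [mem_support_iff, expandP, coeff_sum] at hd
    obtain ⟨j, hjT, hjne⟩ := Finset.exists_ne_zero_of_sum_ne_zero hd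
    rw [coeff_monomial] at hjne
    by_cases hDd : Dmap m a j = d
    · rw [if_pos hDd] at hjne
      rw [Finset.prod_ne_zero_iff] at hjne
      refine ⟨j, fun i => ⟨?_, ?_, ?_⟩, ?_⟩
      · rw [Fintype.mem_piFinset] at hjT
        have := hjT i; rw [Finset.mem_range] at this; omega
      · have := hdle' i.castSucc
        rw [← hDd, Dmap_castSucc] at this
        exact this
      · exact (zmod2_cast_ne_zero _).1 (hjne i (Finset.mem_univ i))
      · have := hdle' (Fin.last m)
        rw [← hDd, Dmap_last] at this
        exact this
    · rw [if_neg hDd] at hjne; exact absurd rfl hjne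
  · rintro ⟨j, hj, hsum⟩
    refine ⟨Dmap m a j, ?_, ?_⟩
    · rw [mem_support_iff, coeffP m a j (fun i => (hj i).1)]
      rw [Finset.prod_ne_zero_iff]
      intro i _
      exact (zmod2_cast_ne_zero _).2 (hj i).2.2
    · rintro si ⟨v, rfl⟩ hle
      rw [Finsupp.single_le_iff] at hle
      rcases Fin.eq_castSucc_or_eq_last v with ⟨i0, rfl⟩ | rfl
      · rw [Dmap_castSucc] at hle
        have := (hj i0).2.1
        omega
      · rw [Dmap_last] at hle; omega

end Alg

open MvPolynomial in
lemma zcl_char (m n : ℕ) (hn : 1 ≤ n) (hm : 1 ≤ m) :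
    zcl (m+1) n = (m+1) * n ↔
      ∃ b : Fin m → ℕ, (∑ t, b t) = n ∧ ∀ t l, ¬(n.testBit l ∧ (b t).testBit l) := by
  have hA : zcl (m+1) n = sSup {s : ℕ | ∃ a : Fin m → ℕ, s = ∑ i, a i ∧
      Ideal.Quotient.mk
        (Ideal.span (Set.range fun i : Fin (m+1) =>
          (X i : MvPolynomial (Fin (m+1)) (ZMod 2)) ^ (n+1)))
        (∏ i : Fin m, (X i.castSucc + X (Fin.last m)) ^ a i) ≠ 0} := rfl
  have hseteq : {s : ℕ | ∃ a : Fin m → ℕ, s = ∑ i, a i ∧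
      Ideal.Quotient.mk
        (Ideal.span (Set.range fun i : Fin (m+1) =>
          (X i : MvPolynomial (Fin (m+1)) (ZMod 2)) ^ (n+1)))
        (∏ i : Fin m, (X i.castSucc + X (Fin.last m)) ^ a i) ≠ 0}
      = {s : ℕ | ∃ a : Fin m → ℕ, s = ∑ i, a i ∧
          ∃ j : Fin m → ℕ, (∀ i, j i ≤ a i ∧ j i ≤ n ∧ Odd ((a i).choose (j i)))
            ∧ (∑ i, (a i - j i)) ≤ n} := by
    ext s
    simp only [Set.mem_setOf_eq]
    constructor
    · rintro ⟨a, h1, h2⟩; exact ⟨a, h1, (algChar m n a).1 h2⟩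
    · rintro ⟨a, h1, h2⟩; exact ⟨a, h1, (algChar m n a).2 h2⟩
  rw [hA, hseteq]
  clear hA hseteq
  set B := {s : ℕ | ∃ a : Fin m → ℕ, s = ∑ i, a i ∧
      ∃ j : Fin m → ℕ, (∀ i, j i ≤ a i ∧ j i ≤ n ∧ Odd ((a i).choose (j i)))
        ∧ (∑ i, (a i - j i)) ≤ n}
  have h0 : (0 : ℕ) ∈ B := by
    refine ⟨fun _ => 0, by simp, fun _ => 0, fun i => ⟨le_rfl, Nat.zero_le n, ?_⟩, by simp⟩
    show Odd (Nat.choose 0 0)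
    simp [Nat.odd_iff]
  have hub : ∀ x ∈ B, x ≤ (m+1) * n := by
    rintro x ⟨a, rfl, j, hj, hsle⟩
    have hsplit : ∑ i, a i = ∑ i, j i + ∑ i, (a i - j i) := by
      rw [← Finset.sum_add_distrib]
      apply Finset.sum_congr rfl
      intro i _
      have := (hj i).1; omega
    have hjle : ∑ i, j i ≤ m * n := by
      calc ∑ i, j i ≤ ∑ _i : Fin m, n := Finset.sum_le_sum (fun i _ => (hj i).2.1)
      _ = m * n := by rw [Finset.sum_const, Finset.card_univ, Fintype.card_fin, smul_eq_mul]
    have : (m+1) * n = m * n + n := by ring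
    omega
  constructor
  · intro h
    have hne : B.Nonempty := ⟨0, h0⟩
    have hbdd : BddAbove B := ⟨(m+1)*n, hub⟩
    have hmem : (m+1) * n ∈ B := h ▸ Nat.sSup_mem hne hbdd
    obtain ⟨a, hsum, j, hj, hsle⟩ := hmem
    have hsplit : ∑ i, a i = ∑ i, j i + ∑ i, (a i - j i) := by
      rw [← Finset.sum_add_distrib]
      apply Finset.sum_congr rfl
      intro i _
      have := (hj i).1; omega
    have hjle : ∑ i, j i ≤ m * n := by
      calc ∑ i, j i ≤ ∑ _i : Fin m, n := Finset.sum_le_sum (fun i _ => (hj i).2.1)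
      _ = m * n := by rw [Finset.sum_const, Finset.card_univ, Fintype.card_fin, smul_eq_mul]
    have hmn : (m+1) * n = m * n + n := by ring
    have hjeq : ∑ i, j i = m * n := by omega
    have hjall : ∀ i, j i = n := by
      by_contra hc
      push_neg at hc
      obtain ⟨i0, hi0⟩ := hc
      have hlt : ∑ i, j i < ∑ _i : Fin m, n := by
        apply Finset.sum_lt_sum (fun i _ => (hj i).2.1)
        exact ⟨i0, Finset.mem_univ i0, lt_of_le_of_ne ((hj i0).2.1) hi0⟩
      rw [Finset.sum_const, Finset.card_univ, Fintype.card_fin, smul_eq_mul] at hlt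
      omega
    refine ⟨fun t => a t - n, ?_, ?_⟩
    · have : ∀ i ∈ Finset.univ, a i - n = a i - j i := fun i _ => by rw [hjall i]
      rw [Finset.sum_congr rfl this]
      omega
    · intro t l
      have hat : a t = n + (a t - n) := by
        have h1 := (hj t).1
        have h2 := hjall t
        omega
      have hodd : Odd ((n + (a t - n)).choose n) := by
        rw [← hat]
        have := (hj t).2.2
        rwa [hjall t] at this
      exact (kummer (n + (a t - n)) n (a t - n) le_rfl).1 hodd l
  · rintro ⟨b, hsum, hcf⟩
    have hmem : (m+1) * n ∈ B := by
      refine ⟨fun t => n + b t, ?_, fun _ => n, fun i => ⟨?_, le_rfl, ?_⟩, ?_⟩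
      · show (m+1) * n = ∑ i : Fin m, (n + b i)
        rw [Finset.sum_add_distrib, hsum, Finset.sum_const, Finset.card_univ,
          Fintype.card_fin, smul_eq_mul]
        ring
      · exact Nat.le_add_right _ _
      · exact (kummer (n + b i) n (b i) le_rfl).2 (hcf i)
      · show ∑ i : Fin m, (n + b i - n) ≤ n
        have he : ∀ i ∈ Finset.univ, n + b i - n = b i := fun i _ => by omega
        rw [Finset.sum_congr rfl he, hsum]
    have hne : B.Nonempty := ⟨0, h0⟩
    have hbdd : BddAbove B := ⟨(m+1)*n, hub⟩
    exact le_antisymm (csSup_le hne hub) (le_csSup hbdd hmem)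

lemma ceil_le_iff (i Z K : ℕ) (hZ : 0 < Z) :
    (⌈((2:ℚ) ^ (i+1) - 1) / (Z:ℚ)⌉ ≤ (K:ℤ)) ↔ 2 ^ (i+1) - 1 ≤ K * Z := by
  rw [Int.ceil_le, div_le_iff₀ (by exact_mod_cast hZ : (0:ℚ) < (Z:ℚ))]
  have h2 : (1:ℕ) ≤ 2 ^ (i+1) := Nat.one_le_two_pow
  have h1 : ((2:ℚ) ^ (i+1) - 1) = ((2 ^ (i+1) - 1 : ℕ) : ℚ) := by
    push_cast [h2]
    ring
  rw [h1, show (((K:ℤ)):ℚ) * (Z:ℚ) = ((K * Z : ℕ) : ℚ) by push_cast; ring]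
  exact_mod_cast Iff.rfl

lemma Zpos (n i : ℕ) (he : Even n) : 0 < Zfun i n := by
  have hZ : n % 2 ^ (i+1) + Zfun i n = 2 ^ (i+1) - 1 := mod_add_Wmask n (i+1)
  have hmod : n % 2 ^ (i+1) % 2 = 0 := by
    have hd : (2:ℕ) ∣ 2 ^ (i+1) := dvd_pow_self 2 (by omega)
    rw [Nat.mod_mod_of_dvd n hd]
    rw [Nat.even_iff] at he
    exact he
  have hp : 2 ^ (i+1) = 2 * 2 ^ i := by ring
  have h2 : (1:ℕ) ≤ 2 ^ i := Nat.one_le_two_pow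
  omega

theorem zcl_eq_mul_iff (n k : ℕ) (hn : 1 ≤ n) (hk : 2 ≤ k) :
    zcl k n = k * n ↔
      Even n ∧
        (insert (3 : ℤ)
          ((Sfin n).image fun i => ⌈((2 : ℚ) ^ (i + 1) - 1) / (Zfun i n : ℚ)⌉)).max'
          (Finset.insert_nonempty _ _) ≤ (k : ℤ) := by
  obtain ⟨m, rfl⟩ : ∃ m, k = m + 1 := ⟨k - 1, by omega⟩
  have hm : 1 ≤ m := by omega
  rw [zcl_char m n hn hm, comb n m hn hm]
  constructor
  · rintro ⟨he, hm2, hb⟩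
    refine ⟨he, ?_⟩
    rw [Finset.max'_le_iff]
    intro y hy
    rw [Finset.mem_insert] at hy
    rcases hy with rfl | hy
    · exact_mod_cast (by omega : (3:ℕ) ≤ m + 1)
    · rw [Finset.mem_image] at hy
      obtain ⟨i, hiS, rfl⟩ := hy
      rw [Sfin, Finset.mem_filter] at hiS
      obtain ⟨-, hipos, h1, h2, h3⟩ := hiS
      have hW := hb i hipos h1 h2 h3
      exact (ceil_le_iff i (Zfun i n) (m+1) (Zpos n i he)).2 hW
  · rintro ⟨he, hmax⟩
    rw [Finset.max'_le_iff] at hmax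
    have h3 := hmax 3 (Finset.mem_insert_self _ _)
    have hm2 : 2 ≤ m := by
      have h4 : (3:ℤ) ≤ ((m + 1 : ℕ) : ℤ) := h3
      push_cast at h4
      omega
    refine ⟨he, hm2, ?_⟩
    intro i hipos h1 h2 h3'
    have hiS : i ∈ Sfin n := by
      rw [Sfin, Finset.mem_filter, Finset.mem_range]
      refine ⟨?_, hipos, h1, h2, h3'⟩
      have ha : 2 ^ i ≤ n := testBit_ge h1
      have hb' := Nat.lt_two_pow_self (n := i)
      omega
    have hc := hmax _ (Finset.mem_insert_of_mem (Finset.mem_image_of_mem _ hiS))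
    exact (ceil_le_iff i (Zfun i n) (m+1) (Zpos n i he)).1 hc
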